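/- Let A, B ⊆ ℤ^m × ℤ^{n+1} be weak cells (in ℤ^{(m+n)+1}, regarding the first m+n coordinates as the base). Then the diamond product A ⋄ B = {(x, y, z) ∈ ℤ^m × ℤ^m × ℤ^{n+1} : (x, z) ∈ A and (y, z) ∈ B} is a weak cell in ℤ^{2m+n+1}. -/

import Mathlib

open FirstOrder

/-- The language of Presburger arithmetic: one binary function `+` and one
binary relation `<`. -/
def presburgerLang : FirstOrder.Language where
  Functions := fun n => match n with | 2 => Unit | _ => Empty
  Relations := fun n => match n with | 2 => Unit | _ => Empty

/-- The standard interpretation of the Presburger language on `ℤ`. -/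
def presburgerStr : presburgerLang.Structure ℤ where
  funMap {n} f v :=
    match n, f, v with
    | 2, _, v => v 0 + v 1
  RelMap {n} r v :=
    match n, r, v with
    | 2, _, v => v 0 < v 1

/-- A set `s ⊆ ℤ^α` is Presburger-definable: it is the realization set of a
first-order formula without parameters in the structure `(ℤ, <, +)`. -/
def PresburgerDef {α : Type*} (s : Set (α → ℤ)) : Prop :=
  letI := presburgerStr
  ∃ φ : presburgerLang.Formula α, s = {v | φ.Realize v}

/-- A function `f : ℤ^α → ℤ` is Presburger-definable iff its graph is. -/
def PresburgerFun {α : Type*} (f : (α → ℤ) → ℤ) : Prop :=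
  PresburgerDef {v : α ⊕ Unit → ℤ | v (Sum.inr ()) = f (fun i => v (Sum.inl i))}

/-- A weak cell in `ℤ^α × ℤ`: one of the four forms
(i) `S × {t : t ≡ k (mod N)}`;
(ii) `{(x, t) : x ∈ S, f(x) ≤ t, t ≡ k (mod N)}`;
(iii) `{(x, t) : x ∈ S, t ≤ g(x), t ≡ k (mod N)}`;
(iv) `{(x, t) : x ∈ S, f(x) ≤ t ≤ g(x), t ≡ k (mod N)}`,
with `S`, `f`, `g` Presburger and `k, N ∈ ℤ`. -/
def IsWeakCell {α : Type*} (C : Set ((α → ℤ) × ℤ)) : Prop :=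
  ∃ (S : Set (α → ℤ)) (k N : ℤ), PresburgerDef S ∧
    (C = {p | p.1 ∈ S ∧ p.2 ≡ k [ZMOD N]} ∨
     (∃ f : (α → ℤ) → ℤ, PresburgerFun f ∧
       C = {p | p.1 ∈ S ∧ f p.1 ≤ p.2 ∧ p.2 ≡ k [ZMOD N]}) ∨
     (∃ g : (α → ℤ) → ℤ, PresburgerFun g ∧
       C = {p | p.1 ∈ S ∧ p.2 ≤ g p.1 ∧ p.2 ≡ k [ZMOD N]}) ∨
     (∃ f g : (α → ℤ) → ℤ, PresburgerFun f ∧ PresburgerFun g ∧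
       C = {p | p.1 ∈ S ∧ f p.1 ≤ p.2 ∧ p.2 ≤ g p.1 ∧ p.2 ≡ k [ZMOD N]}))

section Helpers
open Set FirstOrder Language

variable {α β : Type*}

lemma presburgerDef_iff {s : Set (α → ℤ)} :
    PresburgerDef s ↔ (letI := presburgerStr; Set.Definable ∅ presburgerLang s) := by
  letI := presburgerStr
  exact Set.empty_definable_iff.symm

lemma presburgerDef_le (i j : α) : PresburgerDef {v : α → ℤ | v i ≤ v j} := by
  letI := presburgerStr
  refine ⟨Formula.not
    (@Language.Relations.formula presburgerLang α 2 Unit.unit ![Term.var j, Term.var i]), ?_⟩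
  ext v
  simp only [Set.mem_setOf_eq, Formula.realize_not, Formula.realize_rel]
  constructor
  · intro h h'
    have : v j < v i := h'
    omega
  · intro h
    by_contra h'
    exact h (show v j < v i from by omega : (presburgerStr.RelMap (n := 2) Unit.unit ![v j, v i]))
end Helpers
section Helpers2
open Set

variable {α β : Type*}

lemma PresburgerDef.inter {s t : Set (α → ℤ)} (hs : PresburgerDef s) (ht : PresburgerDef t) :
    PresburgerDef (s ∩ t) := by
  letI := presburgerStr
  rw [presburgerDef_iff] at *
  exact Set.Definable.inter hs ht

lemma PresburgerDef.union {s t : Set (α → ℤ)} (hs : PresburgerDef s) (ht : PresburgerDef t) :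
    PresburgerDef (s ∪ t) := by
  letI := presburgerStr
  rw [presburgerDef_iff] at *
  exact Set.Definable.union hs ht

lemma PresburgerDef.preimage {s : Set (α → ℤ)} (ρ : α → β) (hs : PresburgerDef s) :
    PresburgerDef ((fun w : β → ℤ => w ∘ ρ) ⁻¹' s) := by
  letI := presburgerStr
  rw [presburgerDef_iff] at *
  exact Set.Definable.preimage_comp ρ hs

lemma PresburgerDef.image [Finite α] [Finite β] {s : Set (β → ℤ)} (ρ : α → β)
    (hs : PresburgerDef s) :
    PresburgerDef ((fun w : β → ℤ => w ∘ ρ) '' s) := by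
  letI := presburgerStr
  rw [presburgerDef_iff] at *
  exact Set.Definable.image_comp hs ρ

/-- Relabeling the arguments of a Presburger function. -/
lemma PresburgerFun.reindex {f : (α → ℤ) → ℤ} (hf : PresburgerFun f) (ρ : α → β) :
    PresburgerFun (fun w : β → ℤ => f (w ∘ ρ)) := by
  have h := hf.preimage (Sum.map ρ (id : Unit → Unit))
  exact h

/-- The set `{(x,t) : f x ≤ t}` is Presburger. -/
lemma PresburgerFun.lowerBoundSet [Finite α] {f : (α → ℤ) → ℤ} (hf : PresburgerFun f) :
    PresburgerDef {v : α ⊕ Unit → ℤ | f (fun i => v (Sum.inl i)) ≤ v (Sum.inr ())} := by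
  have h1 : PresburgerDef ((fun w : (α ⊕ Unit) ⊕ Unit → ℤ =>
      w ∘ (Sum.map Sum.inl (id : Unit → Unit))) ⁻¹'
      {v : α ⊕ Unit → ℤ | v (Sum.inr ()) = f (fun i => v (Sum.inl i))}) := hf.preimage _
  have h2 := presburgerDef_le (α := (α ⊕ Unit) ⊕ Unit) (Sum.inr ()) (Sum.inl (Sum.inr ()))
  have h3 := (h1.inter h2).image (Sum.inl : α ⊕ Unit → (α ⊕ Unit) ⊕ Unit)
  convert h3 using 1
  ext v
  constructor
  · intro hv
    refine ⟨Sum.elim v (fun _ => f (fun i => v (Sum.inl i))), ⟨rfl, hv⟩, ?_⟩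
    ext i; rfl
  · rintro ⟨w, ⟨hw1, hw2⟩, rfl⟩
    have h' : f (fun i => w (Sum.inl (Sum.inl i))) = w (Sum.inr ()) := hw1.symm
    show f (fun i => w (Sum.inl (Sum.inl i))) ≤ w (Sum.inl (Sum.inr ()))
    rw [h']; exact hw2

/-- The set `{(x,t) : t ≤ g x}` is Presburger. -/
lemma PresburgerFun.upperBoundSet [Finite α] {g : (α → ℤ) → ℤ} (hg : PresburgerFun g) :
    PresburgerDef {v : α ⊕ Unit → ℤ | v (Sum.inr ()) ≤ g (fun i => v (Sum.inl i))} := by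
  have h1 : PresburgerDef ((fun w : (α ⊕ Unit) ⊕ Unit → ℤ =>
      w ∘ (Sum.map Sum.inl (id : Unit → Unit))) ⁻¹'
      {v : α ⊕ Unit → ℤ | v (Sum.inr ()) = g (fun i => v (Sum.inl i))}) := hg.preimage _
  have h2 := presburgerDef_le (α := (α ⊕ Unit) ⊕ Unit) (Sum.inl (Sum.inr ())) (Sum.inr ())
  have h3 := (h1.inter h2).image (Sum.inl : α ⊕ Unit → (α ⊕ Unit) ⊕ Unit)
  convert h3 using 1
  ext v
  constructor
  · intro hv
    refine ⟨Sum.elim v (fun _ => g (fun i => v (Sum.inl i))), ⟨rfl, hv⟩, ?_⟩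
    ext i; rfl
  · rintro ⟨w, ⟨hw1, hw2⟩, rfl⟩
    have h' : g (fun i => w (Sum.inl (Sum.inl i))) = w (Sum.inr ()) := hw1.symm
    show w (Sum.inl (Sum.inr ())) ≤ g (fun i => w (Sum.inl (Sum.inl i)))
    rw [h']; exact hw2

lemma PresburgerFun.max' [Finite α] {f g : (α → ℤ) → ℤ}
    (hf : PresburgerFun f) (hg : PresburgerFun g) :
    PresburgerFun (fun x => max (f x) (g x)) := by
  have h : {v : α ⊕ Unit → ℤ | v (Sum.inr ()) = max (f (fun i => v (Sum.inl i)))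
        (g (fun i => v (Sum.inl i)))} =
      ({v : α ⊕ Unit → ℤ | v (Sum.inr ()) = f (fun i => v (Sum.inl i))} ∩
        {v | g (fun i => v (Sum.inl i)) ≤ v (Sum.inr ())}) ∪
      ({v : α ⊕ Unit → ℤ | v (Sum.inr ()) = g (fun i => v (Sum.inl i))} ∩
        {v | f (fun i => v (Sum.inl i)) ≤ v (Sum.inr ())}) := by
    ext v
    simp only [Set.mem_setOf_eq, Set.mem_inter_iff, Set.mem_union]
    rw [max_def]; split_ifs <;> constructor <;> intro h <;> omega
  have := (hf.inter hg.lowerBoundSet).union (hg.inter hf.lowerBoundSet)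
  rw [← h] at this; exact this

lemma PresburgerFun.min' [Finite α] {f g : (α → ℤ) → ℤ}
    (hf : PresburgerFun f) (hg : PresburgerFun g) :
    PresburgerFun (fun x => min (f x) (g x)) := by
  have h : {v : α ⊕ Unit → ℤ | v (Sum.inr ()) = min (f (fun i => v (Sum.inl i)))
        (g (fun i => v (Sum.inl i)))} =
      ({v : α ⊕ Unit → ℤ | v (Sum.inr ()) = f (fun i => v (Sum.inl i))} ∩
        {v | v (Sum.inr ()) ≤ g (fun i => v (Sum.inl i))}) ∪
      ({v : α ⊕ Unit → ℤ | v (Sum.inr ()) = g (fun i => v (Sum.inl i))} ∩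
        {v | v (Sum.inr ()) ≤ f (fun i => v (Sum.inl i))}) := by
    ext v
    simp only [Set.mem_setOf_eq, Set.mem_inter_iff, Set.mem_union]
    rw [min_def]; split_ifs <;> constructor <;> intro h <;> omega
  have := (hf.inter hg.upperBoundSet).union (hg.inter hf.upperBoundSet)
  rw [← h] at this; exact this
end Helpers2
section Helpers3
open Set

variable {α β : Type*}

lemma cong_combine (k1 N1 k2 N2 : ℤ) :
    (∀ t : ℤ, ¬(t ≡ k1 [ZMOD N1] ∧ t ≡ k2 [ZMOD N2])) ∨
    ∃ k N : ℤ, ∀ t : ℤ, (t ≡ k1 [ZMOD N1] ∧ t ≡ k2 [ZMOD N2]) ↔ t ≡ k [ZMOD N] := by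
  by_cases h : ∃ t : ℤ, t ≡ k1 [ZMOD N1] ∧ t ≡ k2 [ZMOD N2]
  · obtain ⟨t0, h1, h2⟩ := h
    right
    refine ⟨t0, lcm N1 N2, fun t => ?_⟩
    have key : t ≡ t0 [ZMOD lcm N1 N2] ↔ (t ≡ t0 [ZMOD N1] ∧ t ≡ t0 [ZMOD N2]) := by
      rw [Int.modEq_iff_dvd, Int.modEq_iff_dvd, Int.modEq_iff_dvd, lcm_dvd_iff]
    rw [key]
    constructor
    · rintro ⟨ha, hb⟩
      exact ⟨ha.trans h1.symm, hb.trans h2.symm⟩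
    · rintro ⟨ha, hb⟩
      exact ⟨ha.trans h1, hb.trans h2⟩
  · left
    push_neg at h
    intro t ht
    exact h t ht.1 ht.2

/-- Combine two optional lower bounds by `max`. -/
def optMax (F1 F2 : Option ((β → ℤ) → ℤ)) : Option ((β → ℤ) → ℤ) :=
  match F1, F2 with
  | none, o => o
  | some f, none => some f
  | some f, some g => some (fun x => max (f x) (g x))

/-- Combine two optional upper bounds by `min`. -/
def optMin (F1 F2 : Option ((β → ℤ) → ℤ)) : Option ((β → ℤ) → ℤ) :=
  match F1, F2 with
  | none, o => o
  | some f, none => some f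
  | some f, some g => some (fun x => min (f x) (g x))

lemma optMax_spec (F1 F2 : Option ((β → ℤ) → ℤ)) (x : β → ℤ) (t : ℤ) :
    (∀ f ∈ optMax F1 F2, f x ≤ t) ↔
      (∀ f ∈ F1, f x ≤ t) ∧ (∀ f ∈ F2, f x ≤ t) := by
  rcases F1 with _ | f <;> rcases F2 with _ | g <;>
    simp [optMax, max_le_iff]

lemma optMin_spec (F1 F2 : Option ((β → ℤ) → ℤ)) (x : β → ℤ) (t : ℤ) :
    (∀ g ∈ optMin F1 F2, t ≤ g x) ↔
      (∀ g ∈ F1, t ≤ g x) ∧ (∀ g ∈ F2, t ≤ g x) := by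
  rcases F1 with _ | f <;> rcases F2 with _ | g <;>
    simp [optMin, le_min_iff]

lemma optMax_presburger [Finite β] {F1 F2 : Option ((β → ℤ) → ℤ)}
    (h1 : ∀ f ∈ F1, PresburgerFun f) (h2 : ∀ f ∈ F2, PresburgerFun f) :
    ∀ f ∈ optMax F1 F2, PresburgerFun f := by
  rcases F1 with _ | f <;> rcases F2 with _ | g <;> simp_all [optMax]
  exact h1.max' h2

lemma optMin_presburger [Finite β] {F1 F2 : Option ((β → ℤ) → ℤ)}
    (h1 : ∀ f ∈ F1, PresburgerFun f) (h2 : ∀ f ∈ F2, PresburgerFun f) :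
    ∀ f ∈ optMin F1 F2, PresburgerFun f := by
  rcases F1 with _ | f <;> rcases F2 with _ | g <;> simp_all [optMin]
  exact h1.min' h2

/-- Normalized characterization of weak cells via optional bounds. -/
lemma isWeakCell_iff' (C : Set ((α → ℤ) × ℤ)) :
    IsWeakCell C ↔ ∃ (S : Set (α → ℤ)) (k N : ℤ) (F G : Option ((α → ℤ) → ℤ)),
      PresburgerDef S ∧ (∀ f ∈ F, PresburgerFun f) ∧ (∀ g ∈ G, PresburgerFun g) ∧
      C = {p | p.1 ∈ S ∧ (∀ f ∈ F, f p.1 ≤ p.2) ∧ (∀ g ∈ G, p.2 ≤ g p.1) ∧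
        p.2 ≡ k [ZMOD N]} := by
  constructor
  · rintro ⟨S, k, N, hS, h | ⟨f, hf, h⟩ | ⟨g, hg, h⟩ | ⟨f, g, hf, hg, h⟩⟩
    · exact ⟨S, k, N, none, none, hS, by simp, by simp, by rw [h]; ext p; simp⟩
    · exact ⟨S, k, N, some f, none, hS, by simpa using hf, by simp,
        by rw [h]; ext p; simp⟩
    · exact ⟨S, k, N, none, some g, hS, by simp, by simpa using hg,
        by rw [h]; ext p; simp⟩
    · exact ⟨S, k, N, some f, some g, hS, by simpa using hf, by simpa using hg,
        by rw [h]; ext p; simp⟩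
  · rintro ⟨S, k, N, F, G, hS, hF, hG, h⟩
    refine ⟨S, k, N, hS, ?_⟩
    rcases F with _ | f <;> rcases G with _ | g
    · left; rw [h]; ext p; simp
    · right; right; left
      exact ⟨g, by simpa using hG, by rw [h]; ext p; simp⟩
    · right; left
      exact ⟨f, by simpa using hF, by rw [h]; ext p; simp⟩
    · right; right; right
      exact ⟨f, g, by simpa using hF, by simpa using hG, by rw [h]; ext p; simp⟩
end Helpers3
section Helpers4
variable {α β : Type*}

lemma optReindex_presburger {F : Option ((α → ℤ) → ℤ)} (hF : ∀ f ∈ F, PresburgerFun f)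
    (ρ : α → β) :
    ∀ f ∈ F.map (fun f => (fun w : β → ℤ => f (w ∘ ρ))), PresburgerFun f := by
  rcases F with _ | f <;> simp_all
  exact hF.reindex ρ

lemma optReindexLower_spec (F : Option ((α → ℤ) → ℤ)) (ρ : α → β) (x : β → ℤ) (t : ℤ) :
    (∀ f ∈ F.map (fun f => (fun w : β → ℤ => f (w ∘ ρ))), f x ≤ t) ↔
      ∀ f ∈ F, f (x ∘ ρ) ≤ t := by
  rcases F with _ | f <;> simp

lemma optReindexUpper_spec (F : Option ((α → ℤ) → ℤ)) (ρ : α → β) (x : β → ℤ) (t : ℤ) :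
    (∀ f ∈ F.map (fun f => (fun w : β → ℤ => f (w ∘ ρ))), t ≤ f x) ↔
      ∀ f ∈ F, t ≤ f (x ∘ ρ) := by
  rcases F with _ | f <;> simp
end Helpers4

theorem diamond_of_weakCells (m n : ℕ)
    (A B : Set (((Fin m ⊕ Fin n) → ℤ) × ℤ))
    (hA : IsWeakCell A) (hB : IsWeakCell B) :
    IsWeakCell {p : ((Fin m ⊕ (Fin m ⊕ Fin n)) → ℤ) × ℤ |
      (Sum.elim (fun i => p.1 (Sum.inl i)) (fun j => p.1 (Sum.inr (Sum.inr j))), p.2) ∈ A ∧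
      (Sum.elim (fun i => p.1 (Sum.inr (Sum.inl i))) (fun j => p.1 (Sum.inr (Sum.inr j))), p.2) ∈ B} := by
  rw [isWeakCell_iff'] at hA hB ⊢
  obtain ⟨SA, kA, NA, FA, GA, hSA, hFA, hGA, hAeq⟩ := hA
  obtain ⟨SB, kB, NB, FB, GB, hSB, hFB, hGB, hBeq⟩ := hB
  set ρA : (Fin m ⊕ Fin n) → (Fin m ⊕ (Fin m ⊕ Fin n)) :=
    Sum.elim Sum.inl (Sum.inr ∘ Sum.inr) with hρA
  set ρB : (Fin m ⊕ Fin n) → (Fin m ⊕ (Fin m ⊕ Fin n)) := Sum.inr with hρB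
  have hπA : ∀ w : (Fin m ⊕ (Fin m ⊕ Fin n)) → ℤ,
      Sum.elim (fun i => w (Sum.inl i)) (fun j => w (Sum.inr (Sum.inr j))) = w ∘ ρA := by
    intro w; ext x; cases x <;> rfl
  have hπB : ∀ w : (Fin m ⊕ (Fin m ⊕ Fin n)) → ℤ,
      Sum.elim (fun i => w (Sum.inr (Sum.inl i))) (fun j => w (Sum.inr (Sum.inr j))) = w ∘ ρB := by
    intro w; ext x; cases x <;> rfl
  rw [← hρB] at hπA hπB
  rcases cong_combine kA NA kB NB with h | ⟨k, N, hk⟩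
  · refine ⟨∅, 0, 1, none, none, ?_, by simp, by simp, ?_⟩
    · rw [presburgerDef_iff]
      letI := presburgerStr
      exact Set.definable_empty
    · ext p
      constructor
      · rintro ⟨hpA, hpB⟩
        rw [hAeq] at hpA
        rw [hBeq] at hpB
        exact absurd ⟨hpA.2.2.2, hpB.2.2.2⟩ (h p.2)
      · rintro ⟨h', -⟩
        exact absurd h' (Set.notMem_empty _)
  · refine ⟨((fun w => w ∘ ρA) ⁻¹' SA) ∩ ((fun w => w ∘ ρB) ⁻¹' SB), k, N,
      optMax (FA.map fun f => (fun w => f (w ∘ ρA))) (FB.map fun f => (fun w => f (w ∘ ρB))),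
      optMin (GA.map fun g => (fun w => g (w ∘ ρA))) (GB.map fun g => (fun w => g (w ∘ ρB))),
      (hSA.preimage ρA).inter (hSB.preimage ρB),
      optMax_presburger (optReindex_presburger hFA ρA) (optReindex_presburger hFB ρB),
      optMin_presburger (optReindex_presburger hGA ρA) (optReindex_presburger hGB ρB), ?_⟩
    ext p
    simp only [Set.mem_setOf_eq, hAeq, hBeq, Set.mem_inter_iff, Set.mem_preimage,
      hπA, hπB, optMax_spec, optMin_spec, optReindexLower_spec, optReindexUpper_spec,
      ← hk p.2]
    tauto
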